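/- Let E be a finite-dimensional real inner product space and f : E → ℝ a continuous function. Let x : ℕ → E, u : ℕ → ℝ and R : ℕ → ℝ be such that u (k+1) ∈ [u_min, 1] with u_min ∈ (0,1] for all k, R (k+1) = (1 - u (k+1))·R k + u (k+1)·f(x (k+1)) for all k, (R k) is nonincreasing, f(x k) ≤ R k for all k, and (R k) is bounded from below. Then (R k) converges to some limit f* ∈ ℝ, f(x k) → f* as k → ∞, and f(x̄) = f* for every cluster point x̄ of the sequence (x k). -/
import Mathlib


/-- Core of Lemma 3: the reference sequence converges, the objective values converge to
the same limit, and the objective is constant on the set of limit points of the iterates. -/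
theorem nhota_limit_points_constant_value
    {E : Type*} [NormedAddCommGroup E] [InnerProductSpace ℝ E] [FiniteDimensional ℝ E]
    (f : E → ℝ) (hf : Continuous f)
    (x : ℕ → E) (u : ℕ → ℝ) (R : ℕ → ℝ)
    (u_min : ℝ) (humin : 0 < u_min ∧ u_min ≤ 1)
    (hu : ∀ k : ℕ, u_min ≤ u (k + 1) ∧ u (k + 1) ≤ 1)
    (hRrec : ∀ k : ℕ, R (k + 1) = (1 - u (k + 1)) * R k + u (k + 1) * f (x (k + 1)))
    (hmono : ∀ k : ℕ, R (k + 1) ≤ R k)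
    (hfR : ∀ k : ℕ, f (x k) ≤ R k)
    (hbdd : ∃ m : ℝ, ∀ k : ℕ, m ≤ R k) :
    ∃ fstar : ℝ,
      Filter.Tendsto R Filter.atTop (nhds fstar) ∧
      Filter.Tendsto (fun k : ℕ => f (x k)) Filter.atTop (nhds fstar) ∧
      ∀ y : E, (∃ φ : ℕ → ℕ, StrictMono φ ∧
          Filter.Tendsto (fun t : ℕ => x (φ t)) Filter.atTop (nhds y)) →
        f y = fstar := by
  obtain ⟨m, hm⟩ := hbdd
  have hanti : Antitone R := antitone_nat_of_succ_le hmono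
  have hbb : BddBelow (Set.range R) := ⟨m, by rintro _ ⟨k, rfl⟩; exact hm k⟩
  set fstar := ⨅ k, R k with hfstar
  have hR : Filter.Tendsto R Filter.atTop (nhds fstar) :=
    tendsto_atTop_ciInf hanti hbb
  have humin0 : 0 < u_min := humin.1
  -- f (x (k+1)) = R k - (R k - R (k+1)) / u (k+1)
  have key : ∀ k : ℕ, f (x (k + 1)) = R k - (R k - R (k + 1)) / u (k + 1) := by
    intro k
    have hupos : 0 < u (k + 1) := lt_of_lt_of_le humin0 (hu k).1
    field_simp
    rw [hRrec k]; ring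
  have hlb : ∀ k : ℕ, R k - (R k - R (k + 1)) / u_min ≤ f (x (k + 1)) := by
    intro k
    rw [key k]
    have h1 : (R k - R (k + 1)) / u_min ≥ (R k - R (k + 1)) / u (k + 1) :=
      div_le_div_of_nonneg_left (by linarith [hmono k]) humin0 (hu k).1
    linarith
  have hlbt : Filter.Tendsto (fun k : ℕ => R k - (R k - R (k + 1)) / u_min)
      Filter.atTop (nhds fstar) := by
    have hR1 : Filter.Tendsto (fun k : ℕ => R (k + 1)) Filter.atTop (nhds fstar) :=
      hR.comp (Filter.tendsto_add_atTop_nat 1)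
    have := hR.sub (((hR.sub hR1).div_const u_min))
    simpa using this
  have hubt : Filter.Tendsto (fun k : ℕ => R (k + 1)) Filter.atTop (nhds fstar) :=
    hR.comp (Filter.tendsto_add_atTop_nat 1)
  have hfx1 : Filter.Tendsto (fun k : ℕ => f (x (k + 1))) Filter.atTop (nhds fstar) :=
    tendsto_of_tendsto_of_tendsto_of_le_of_le hlbt hubt hlb (fun k => hfR (k + 1))
  have hfx : Filter.Tendsto (fun k : ℕ => f (x k)) Filter.atTop (nhds fstar) :=
    (Filter.tendsto_add_atTop_iff_nat 1).mp hfx1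
  refine ⟨fstar, hR, hfx, ?_⟩
  rintro y ⟨φ, hφ, hφt⟩
  have h1 : Filter.Tendsto (fun t : ℕ => f (x (φ t))) Filter.atTop (nhds (f y)) :=
    (hf.tendsto y).comp hφt
  have h2 : Filter.Tendsto (fun t : ℕ => f (x (φ t))) Filter.atTop (nhds fstar) :=
    hfx.comp hφ.tendsto_atTop
  exact tendsto_nhds_unique h1 h2
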